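/- Fix n ≥ 1, r > 0, and x⁰ ∈ ℝⁿ. Let f : ℝⁿ → ℝ be three times continuously differentiable on an open set containing the closed ball B_n(x⁰;r), with ∇²f Lipschitz continuous with constant L_H on B_n(x⁰;r). Define the second-order Taylor remainder R₂(x⁰+x) = f(x⁰+x) − f(x⁰) − ∇f(x⁰)ᵀx − (1/2) xᵀ ∇²f(x⁰) x, and define z ∈ ℝⁿ by z_i = ∫_{B_n(0;r)} x_i · R₂(x⁰+x) dx. Let V_{n+2} = 2π^{n/2+1} r^{n+2} / (Γ(n/2+1)(n+2)) and η = Γ((n+4)/2) / (√π · Γ((n+3)/2)). Then (2π / V_{n+2}) · ‖z‖ ≤ (√n / (3√π)) · L_H · η · r². -/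

import Mathlib

open MeasureTheory Metric Set

open scoped BigOperators

noncomputable section

/-- Interpret a plain vector in `Fin n → ℝ` as an element of Euclidean space,
so that `‖·‖` is the Euclidean norm. -/
def vecE {n : ℕ} (v : Fin n → ℝ) : EuclideanSpace ℝ (Fin n) :=
  (EuclideanSpace.equiv (Fin n) ℝ).symm v

/-- The volume of the ball of radius `r` in `ℝ^{n+2}`:
`V_{n+2} = 2π^{n/2+1} r^{n+2} / (Γ(n/2+1)(n+2))`. -/
def Vnp2 (n : ℕ) (r : ℝ) : ℝ :=
  2 * Real.pi ^ ((n : ℝ) / 2 + 1) * r ^ (n + 2)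
    / (Real.Gamma ((n : ℝ) / 2 + 1) * ((n : ℝ) + 2))


lemma ball_moment (n k : ℕ) (hn : 1 ≤ n) (r : ℝ) (hr : 0 < r) :
    ∫ x in closedBall (0 : EuclideanSpace ℝ (Fin n)) r, ‖x‖ ^ k
      = n * (volume (ball (0 : EuclideanSpace ℝ (Fin n)) 1)).toReal * (r ^ (n + k) / (n + k)) := by
  haveI : Nonempty (Fin n) := ⟨⟨0, hn⟩⟩
  set F : ℝ → ℝ := Set.indicator (Icc 0 r) (fun y => y ^ k) with hF
  have h1 : ∫ x in closedBall (0 : EuclideanSpace ℝ (Fin n)) r, ‖x‖ ^ k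
      = ∫ x : EuclideanSpace ℝ (Fin n), F ‖x‖ := by
    rw [← integral_indicator (measurableSet_closedBall)]
    congr 1
    ext x
    by_cases hx : x ∈ closedBall (0 : EuclideanSpace ℝ (Fin n)) r
    · rw [Set.indicator_of_mem hx, hF, Set.indicator_of_mem]
      exact ⟨norm_nonneg _, by simpa [mem_closedBall, dist_zero_right] using hx⟩
    · rw [Set.indicator_of_notMem hx, hF, Set.indicator_of_notMem]
      intro hmem
      exact hx (by simpa [mem_closedBall, dist_zero_right] using hmem.2)
  rw [h1, integral_fun_norm_addHaar volume F, finrank_euclideanSpace, Fintype.card_fin]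
  have h2 : ∫ y in Ioi (0:ℝ), y ^ (n - 1) • F y = r ^ (n + k) / (n + k) := by
    have : ∀ y ∈ Ioi (0:ℝ), y ^ (n-1) • F y = Set.indicator (Icc 0 r) (fun y => y ^ (n - 1 + k)) y := by
      intro y hy
      by_cases hmem : y ∈ Icc (0:ℝ) r
      · rw [hF, Set.indicator_of_mem hmem, Set.indicator_of_mem hmem, smul_eq_mul, ← pow_add]
      · rw [hF, Set.indicator_of_notMem hmem, Set.indicator_of_notMem hmem, smul_zero]
    rw [setIntegral_congr_fun measurableSet_Ioi this, setIntegral_indicator measurableSet_Icc]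
    have hi : Ioi (0:ℝ) ∩ Icc 0 r = Ioc 0 r := by
      ext y; simp only [mem_inter_iff, mem_Ioi, mem_Icc, mem_Ioc]
      constructor
      · rintro ⟨h1, _, h3⟩; exact ⟨h1, h3⟩
      · rintro ⟨h1, h2⟩; exact ⟨h1, le_of_lt h1, h2⟩
    rw [hi, ← intervalIntegral.integral_of_le hr.le, integral_pow]
    have : n - 1 + k + 1 = n + k := by omega
    rw [this, zero_pow (by omega : n + k ≠ 0)]
    rw [show ((n-1+k:ℕ):ℝ) + 1 = ((n-1+k+1 : ℕ):ℝ) by push_cast; ring, this, Nat.cast_add]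
    norm_num
  rw [h2, nsmul_eq_mul, smul_eq_mul, mul_assoc, measureReal_def]

variable {n : ℕ}

/-- Change of variables by a linear isometry equivalence fixing 0, over the closed ball. -/
lemma isom_setIntegral (T : EuclideanSpace ℝ (Fin n) ≃ₗᵢ[ℝ] EuclideanSpace ℝ (Fin n))
    (g : EuclideanSpace ℝ (Fin n) → ℝ) (r : ℝ) :
    ∫ x in closedBall (0 : EuclideanSpace ℝ (Fin n)) r, g x
      = ∫ x in closedBall (0 : EuclideanSpace ℝ (Fin n)) r, g (T x) := by
  have himg : T '' closedBall (0 : EuclideanSpace ℝ (Fin n)) r = closedBall 0 r := by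
    rw [← T.coe_toIsometryEquiv, T.toIsometryEquiv.image_closedBall]
    simp
  conv_lhs => rw [← himg]
  exact T.measurePreserving.setIntegral_image_emb
    T.toHomeomorph.measurableEmbedding g _

lemma coord_sq_integral (hn : 1 ≤ n) (r : ℝ) (i : Fin n) :
    ∫ x in closedBall (0 : EuclideanSpace ℝ (Fin n)) r, (x i)^2
      = (1 / (n:ℝ)) * ∫ x in closedBall (0 : EuclideanSpace ℝ (Fin n)) r, ‖x‖^2 := by
  haveI : Nonempty (Fin n) := ⟨⟨0, hn⟩⟩
  have hswap : ∀ j : Fin n,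
      ∫ x in closedBall (0 : EuclideanSpace ℝ (Fin n)) r, (x j)^2
        = ∫ x in closedBall (0 : EuclideanSpace ℝ (Fin n)) r, (x i)^2 := by
    intro j
    have := isom_setIntegral (LinearIsometryEquiv.piLpCongrLeft 2 ℝ ℝ (Equiv.swap i j))
      (fun x => (x j)^2) r
    rw [this]
    congr 1; ext x
    congr 1
    show (LinearIsometryEquiv.piLpCongrLeft 2 ℝ ℝ (Equiv.swap i j)) x j = x i
    rw [LinearIsometryEquiv.piLpCongrLeft_apply, Equiv.piCongrLeft'_apply, Equiv.symm_swap,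
      Equiv.swap_apply_right]
  have hnorm : ∫ x in closedBall (0 : EuclideanSpace ℝ (Fin n)) r, ‖x‖^2
      = ∑ j : Fin n, ∫ x in closedBall (0 : EuclideanSpace ℝ (Fin n)) r, (x j)^2 := by
    rw [← integral_finset_sum]
    · congr 1; ext x
      rw [EuclideanSpace.norm_eq, Real.sq_sqrt (by positivity)]
      simp [Real.norm_eq_abs, sq_abs]
    · intro j _
      exact (ContinuousOn.pow (PiLp.continuous_apply 2 (fun _ : Fin n => ℝ) j).continuousOn 2).integrableOn_compact
        (isCompact_closedBall _ _)
  rw [hnorm]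
  rw [Finset.sum_congr rfl (fun j _ => hswap j), Finset.sum_const]
  simp only [Finset.card_univ, Fintype.card_fin, nsmul_eq_mul]
  rw [← mul_assoc, one_div, inv_mul_cancel₀ (by positivity : (n:ℝ) ≠ 0), one_mul]

lemma coord_mul_integral (r : ℝ) (i j : Fin n) (hij : i ≠ j) :
    ∫ x in closedBall (0 : EuclideanSpace ℝ (Fin n)) r, (x i) * (x j) = 0 := by
  set T := LinearIsometryEquiv.piLpCongrRight 2
    (fun k : Fin n => if k = i then LinearIsometryEquiv.neg ℝ (E := ℝ) else
      LinearIsometryEquiv.refl ℝ ℝ) with hT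
  have h := isom_setIntegral T (fun x => (x i) * (x j)) r
  have hTi : ∀ x : EuclideanSpace ℝ (Fin n), T x i = - x i := by
    intro x
    show (LinearIsometryEquiv.piLpCongrRight 2 _) x i = _
    rw [LinearIsometryEquiv.piLpCongrRight_apply]
    simp
  have hTj : ∀ x : EuclideanSpace ℝ (Fin n), T x j = x j := by
    intro x
    show (LinearIsometryEquiv.piLpCongrRight 2 _) x j = _
    rw [LinearIsometryEquiv.piLpCongrRight_apply]
    simp [hij.symm]
  have h2 : ∫ x in closedBall (0 : EuclideanSpace ℝ (Fin n)) r, (x i) * (x j)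
      = - ∫ x in closedBall (0 : EuclideanSpace ℝ (Fin n)) r, (x i) * (x j) := by
    conv_lhs => rw [h]
    rw [← integral_neg]
    congr 1; ext x
    rw [hTi, hTj]; ring
  linarith


lemma gamma_half_sq (a : ℝ) (ha : 0 < a) :
    Real.Gamma (a + 1/2) ^ 2 * a ≤ Real.Gamma (a + 1) ^ 2 := by
  have h0 : Real.Gamma a > 0 := Real.Gamma_pos_of_pos ha
  have h1 : Real.Gamma (a + 1) > 0 := Real.Gamma_pos_of_pos (by linarith)
  have h2 : Real.Gamma (a + 1/2) > 0 := Real.Gamma_pos_of_pos (by linarith)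
  have hconv := Real.convexOn_log_Gamma.2 (Set.mem_Ioi.mpr ha)
    (Set.mem_Ioi.mpr (by linarith : (0:ℝ) < a + 1))
    (by norm_num : (0:ℝ) ≤ 1/2) (by norm_num : (0:ℝ) ≤ 1/2) (by norm_num)
  have heq : (1/2 : ℝ) • a + (1/2 : ℝ) • (a + 1) = a + 1/2 := by simp only [smul_eq_mul]; ring
  rw [heq] at hconv
  simp only [Function.comp_apply, smul_eq_mul] at hconv
  -- hconv : log Γ(a+1/2) ≤ 1/2 log Γ a + 1/2 log Γ (a+1)
  have hmul : Real.Gamma (a + 1/2) ^ 2 ≤ Real.Gamma a * Real.Gamma (a + 1) := by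
    have h3 : Real.log (Real.Gamma (a + 1/2) ^ 2) ≤ Real.log (Real.Gamma a * Real.Gamma (a + 1)) := by
      rw [Real.log_pow, Real.log_mul h0.ne' h1.ne']
      push_cast
      linarith
    exact (Real.log_le_log_iff (by positivity) (by positivity)).mp h3
  have hrec : Real.Gamma (a + 1) = a * Real.Gamma a := Real.Gamma_add_one ha.ne'
  calc Real.Gamma (a + 1/2) ^ 2 * a ≤ Real.Gamma a * Real.Gamma (a+1) * a := by
        exact mul_le_mul_of_nonneg_right hmul ha.le
    _ = Real.Gamma (a + 1) ^ 2 := by rw [hrec]; ring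


lemma taylor_remainder_bound {E : Type*} [NormedAddCommGroup E] [InnerProductSpace ℝ E]
    [CompleteSpace E]
    (r : ℝ) (x0 : E) (f : E → ℝ) (U : Set E) (hU : IsOpen U)
    (hsub : Metric.closedBall x0 r ⊆ U) (hf : ContDiffOn ℝ 3 f U)
    (L : NNReal)
    (hlip : LipschitzOnWith L (fun x => fderiv ℝ (gradient f) x) (Metric.closedBall x0 r))
    (x : E) (hx : ‖x‖ ≤ r) :
    |f (x0 + x) - f x0 - (inner ℝ (gradient f x0) x : ℝ)
      - (1/2) * (inner ℝ (fderiv ℝ (gradient f) x0 x) x : ℝ)| ≤ (L : ℝ) * ‖x‖^3 / 6 := by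
  set H : E → (E →L[ℝ] E) := fun y => fderiv ℝ (gradient f) y with hH
  set c : ℝ → E := fun t => x0 + t • x with hc
  have hc0 : c 0 = x0 := by simp [hc]
  have hc1 : c 1 = x0 + x := by simp [hc]
  have hr0 : (0:ℝ) ≤ r := le_trans (norm_nonneg x) hx
  have hmem : ∀ t ∈ Icc (0:ℝ) 1, c t ∈ Metric.closedBall x0 r := by
    intro t ht
    simp only [hc, Metric.mem_closedBall, dist_eq_norm, add_sub_cancel_left, norm_smul,
      Real.norm_eq_abs]
    calc |t| * ‖x‖ ≤ 1 * ‖x‖ := by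
          apply mul_le_mul_of_nonneg_right _ (norm_nonneg x)
          rw [abs_le]; exact ⟨by linarith [ht.1], ht.2⟩
      _ ≤ r := by rwa [one_mul]
  have hmemU : ∀ t ∈ Icc (0:ℝ) 1, c t ∈ U := fun t ht => hsub (hmem t ht)
  have hcd : ∀ t : ℝ, HasDerivAt c x t := by
    intro t
    have h1 : HasDerivAt (fun s : ℝ => s • x) ((1:ℝ) • x) t := (hasDerivAt_id t).smul_const x
    simpa [hc] using h1.const_add x0
  -- differentiability of gradient
  have hgrad_diff : ∀ y ∈ U, DifferentiableAt ℝ (gradient f) y := by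
    intro y hy
    have h3 : ContDiffAt ℝ 3 f y := hf.contDiffAt (hU.mem_nhds hy)
    have h2 : ContDiffAt ℝ 2 (fderiv ℝ f) y := h3.fderiv_right (by norm_num)
    have h2' : DifferentiableAt ℝ (fderiv ℝ f) y := h2.differentiableAt (by norm_num)
    have : gradient f = fun z => (InnerProductSpace.toDual ℝ E).symm (fderiv ℝ f z) := rfl
    rw [this]
    exact ((InnerProductSpace.toDual ℝ E).symm.toContinuousLinearEquiv.differentiableAt).comp y h2'
  -- first derivative of φ
  have hφ : ∀ t ∈ Icc (0:ℝ) 1, HasDerivAt (fun s => f (c s))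
      ((inner ℝ (gradient f (c t)) x : ℝ)) t := by
    intro t ht
    have hy := hmemU t ht
    have h1 : DifferentiableAt ℝ f (c t) :=
      (hf.contDiffAt (hU.mem_nhds hy)).differentiableAt (by norm_num)
    have h2 := h1.hasFDerivAt.comp_hasDerivAt t (hcd t)
    rw [show (inner ℝ (gradient f (c t)) x : ℝ) = fderiv ℝ f (c t) x from
      InnerProductSpace.toDual_symm_apply]
    exact h2
  -- derivative of the gradient term
  have hG : ∀ t ∈ Icc (0:ℝ) 1, HasDerivAt (fun s => (inner ℝ (gradient f (c s)) x : ℝ))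
      ((inner ℝ (H (c t) x) x : ℝ)) t := by
    intro t ht
    have hy := hmemU t ht
    have hg : HasFDerivAt (gradient f) (H (c t)) (c t) := (hgrad_diff _ hy).hasFDerivAt
    have h2 : HasDerivAt (fun s => gradient f (c s)) (H (c t) x) t :=
      hg.comp_hasDerivAt t (hcd t)
    have h3 := h2.inner ℝ (hasDerivAt_const t x)
    simpa using h3
  set a : ℝ := (inner ℝ (gradient f x0) x : ℝ) with ha
  set b : ℝ := (inner ℝ (H x0 x) x : ℝ) with hb
  set C : ℝ := (L:ℝ) * ‖x‖^3 with hCdef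
  have hC : 0 ≤ C := by positivity
  -- Lipschitz bound on second derivative variation
  have hHb : ∀ t ∈ Icc (0:ℝ) 1, |(inner ℝ (H (c t) x) x : ℝ) - b| ≤ C * t := by
    intro t ht
    have hx0mem : x0 ∈ Metric.closedBall x0 r := Metric.mem_closedBall_self hr0
    have h1 : dist (H (c t)) (H x0) ≤ (L:ℝ) * dist (c t) x0 :=
      hlip.dist_le_mul _ (hmem t ht) _ hx0mem
    have hdist : dist (c t) x0 = t * ‖x‖ := by
      simp only [hc, dist_eq_norm, add_sub_cancel_left, norm_smul, Real.norm_eq_abs]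
      rw [abs_of_nonneg ht.1]
    rw [hdist, dist_eq_norm] at h1
    have h2 : (inner ℝ (H (c t) x) x : ℝ) - b = (inner ℝ ((H (c t) - H x0) x) x : ℝ) := by
      rw [hb, ContinuousLinearMap.sub_apply, inner_sub_left]
    rw [h2]
    calc |(inner ℝ ((H (c t) - H x0) x) x : ℝ)| ≤ ‖(H (c t) - H x0) x‖ * ‖x‖ :=
          abs_real_inner_le_norm _ _
      _ ≤ (‖H (c t) - H x0‖ * ‖x‖) * ‖x‖ := by
          apply mul_le_mul_of_nonneg_right ((H (c t) - H x0).le_opNorm x) (norm_nonneg x)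
      _ ≤ ((L:ℝ) * (t * ‖x‖) * ‖x‖) * ‖x‖ := by
          have := mul_le_mul_of_nonneg_right (mul_le_mul_of_nonneg_right h1 (norm_nonneg x))
            (norm_nonneg x)
          exact this
      _ = C * t := by rw [hCdef]; ring
  -- Step A : |G t - a - t*b| ≤ C*t^2/2 on Icc
  have keyA : ∀ t ∈ Icc (0:ℝ) 1, |(inner ℝ (gradient f (c t)) x : ℝ) - a - t * b| ≤ C * t^2 / 2 := by
    have hderivs : ∀ (s : ℝ), ∀ t ∈ Icc (0:ℝ) 1, HasDerivAt
        (fun u => C * u^2/2 + s * ((inner ℝ (gradient f (c u)) x : ℝ) - a - u * b))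
        (C * t + s * ((inner ℝ (H (c t) x) x : ℝ) - b)) t := by
      intro s t ht
      have h1 : HasDerivAt (fun u : ℝ => C * u^2/2) (C * t) t := by
        have := (hasDerivAt_pow 2 t).const_mul (C/2)
        convert this using 1
        · rfl
        · rfl
        · ext u; ring
        · push_cast; ring
      have h2 : HasDerivAt (fun u => (inner ℝ (gradient f (c u)) x : ℝ) - a - u * b)
          ((inner ℝ (H (c t) x) x : ℝ) - b) t := by
        have h3 := ((hG t ht).sub_const a).sub ((hasDerivAt_id t).const_mul b)
        convert h3 using 1
        · rfl
        · rfl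
        · ext u; simp only [id_eq, Pi.sub_apply]; ring
        · ring
      exact h1.add (h2.const_mul s)
    have hmono : ∀ s : ℝ, |s| = 1 → MonotoneOn
        (fun u => C * u^2/2 + s * ((inner ℝ (gradient f (c u)) x : ℝ) - a - u * b))
        (Icc (0:ℝ) 1) := by
      intro s hs
      apply monotoneOn_of_deriv_nonneg (convex_Icc 0 1)
      · intro t ht
        exact ((hderivs s t ht).continuousAt).continuousWithinAt
      · intro t ht
        rw [interior_Icc] at ht
        exact ((hderivs s t (Ioo_subset_Icc_self ht)).differentiableAt).differentiableWithinAt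
      · intro t ht
        rw [interior_Icc] at ht
        rw [(hderivs s t (Ioo_subset_Icc_self ht)).deriv]
        have h4 := hHb t (Ioo_subset_Icc_self ht)
        have h5 : |s * ((inner ℝ (H (c t) x) x : ℝ) - b)| ≤ C * t := by
          rw [abs_mul, hs, one_mul]; exact h4
        have := neg_abs_le (s * ((inner ℝ (H (c t) x) x : ℝ) - b))
        linarith
    intro t ht
    have h0mem : (0:ℝ) ∈ Icc (0:ℝ) 1 := by norm_num
    have hzero : ∀ s : ℝ, (fun u => C * u^2/2 +
        s * ((inner ℝ (gradient f (c u)) x : ℝ) - a - u * b)) 0 = 0 := by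
      intro s
      simp only [hc0, ha]
      ring
    rw [abs_le]
    constructor
    · have := hmono 1 (by norm_num) h0mem ht ht.1
      rw [hzero] at this
      simp only at this
      linarith
    · have := hmono (-1) (by norm_num) h0mem ht ht.1
      rw [hzero] at this
      simp only at this
      linarith
  -- Step B
  have keyB : ∀ s : ℝ, |s| = 1 →
      0 ≤ C * (1:ℝ)^3/6 + s * (f (c 1) - f x0 - 1 * a - 1^2/2 * b) := by
    intro s hs
    have hderivs : ∀ t ∈ Icc (0:ℝ) 1, HasDerivAt
        (fun u => C * u^3/6 + s * (f (c u) - f x0 - u * a - u^2/2 * b))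
        (C * t^2/2 + s * ((inner ℝ (gradient f (c t)) x : ℝ) - a - t * b)) t := by
      intro t ht
      have h1 : HasDerivAt (fun u : ℝ => C * u^3/6) (C * t^2/2) t := by
        have := (hasDerivAt_pow 3 t).const_mul (C/6)
        convert this using 1
        · rfl
        · rfl
        · ext u; ring
        · push_cast; ring
      have h2 : HasDerivAt (fun u => f (c u) - f x0 - u * a - u^2/2 * b)
          ((inner ℝ (gradient f (c t)) x : ℝ) - a - t * b) t := by
        have h3 := (((hφ t ht).sub_const (f x0)).sub ((hasDerivAt_id t).const_mul a)).sub
          ((hasDerivAt_pow 2 t).const_mul (b/2))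
        convert h3 using 1
        · rfl
        · rfl
        · ext u; simp only [id_eq, Pi.sub_apply]; ring
        · push_cast; ring
      exact h1.add (h2.const_mul s)
    have hmono : MonotoneOn
        (fun u => C * u^3/6 + s * (f (c u) - f x0 - u * a - u^2/2 * b)) (Icc (0:ℝ) 1) := by
      apply monotoneOn_of_deriv_nonneg (convex_Icc 0 1)
      · intro t ht
        exact ((hderivs t ht).continuousAt).continuousWithinAt
      · intro t ht
        rw [interior_Icc] at ht
        exact ((hderivs t (Ioo_subset_Icc_self ht)).differentiableAt).differentiableWithinAt
      · intro t ht
        rw [interior_Icc] at ht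
        rw [(hderivs t (Ioo_subset_Icc_self ht)).deriv]
        have h4 := keyA t (Ioo_subset_Icc_self ht)
        have h5 : |s * ((inner ℝ (gradient f (c t)) x : ℝ) - a - t * b)| ≤ C * t^2/2 := by
          rw [abs_mul, hs, one_mul]; exact h4
        have := neg_abs_le (s * ((inner ℝ (gradient f (c t)) x : ℝ) - a - t * b))
        linarith
    have h0mem : (0:ℝ) ∈ Icc (0:ℝ) 1 := by norm_num
    have h1mem : (1:ℝ) ∈ Icc (0:ℝ) 1 := by norm_num
    have := hmono h0mem h1mem (by norm_num)
    simp only [hc0] at this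
    have hz : C * (0:ℝ)^3/6 + s * (f x0 - f x0 - 0 * a - (0:ℝ)^2/2 * b) = 0 := by ring
    rw [hz] at this
    exact this
  have hp := keyB 1 (by norm_num)
  have hm := keyB (-1) (by norm_num)
  rw [hc1] at hp hm
  rw [abs_le]
  constructor
  · linarith
  · linarith


set_option maxHeartbeats 2000000 in
/-- Lemma 5.8 of the paper: with `zᵢ = ∫_{Bₙ(0;r)} xᵢ·R₂(x⁰+x) dx`, where `R₂`
is the second-order Taylor remainder of `f` at `x⁰`, and
`η = Γ((n+4)/2)/(√π·Γ((n+3)/2))`, one has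
`(2π/V_{n+2})·‖z‖ ≤ (√n/(3√π))·L_H·η·r²`. -/
theorem ball_remainder_bound
    (n : ℕ) (hn : 1 ≤ n) (r : ℝ) (hr : 0 < r)
    (x0 : EuclideanSpace ℝ (Fin n))
    (f : EuclideanSpace ℝ (Fin n) → ℝ)
    (U : Set (EuclideanSpace ℝ (Fin n))) (hU : IsOpen U)
    (hsub : Metric.closedBall x0 r ⊆ U)
    (hf : ContDiffOn ℝ 3 f U)
    (LH : NNReal)
    (hlip : LipschitzOnWith LH (fun x => fderiv ℝ (gradient f) x)
      (Metric.closedBall x0 r))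
    (z : Fin n → ℝ)
    (hz : ∀ i, z i = ∫ x in Metric.closedBall (0 : EuclideanSpace ℝ (Fin n)) r,
        x i * (f (x0 + x) - f x0 - (inner ℝ (gradient f x0) x : ℝ)
          - (1 / 2) * (inner ℝ (fderiv ℝ (gradient f) x0 x) x : ℝ))) :
    (2 * Real.pi / Vnp2 n r) * ‖vecE z‖
      ≤ (Real.sqrt n / (3 * Real.sqrt Real.pi)) * (LH : ℝ)
          * (Real.Gamma (((n : ℝ) + 4) / 2)
              / (Real.sqrt Real.pi * Real.Gamma (((n : ℝ) + 3) / 2)))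
          * r ^ 2 := by
  classical
  set B := Metric.closedBall (0 : EuclideanSpace ℝ (Fin n)) r with hB
  set R : EuclideanSpace ℝ (Fin n) → ℝ := fun x => f (x0 + x) - f x0 - (inner ℝ (gradient f x0) x : ℝ)
      - (1 / 2) * (inner ℝ (fderiv ℝ (gradient f) x0 x) x : ℝ) with hR
  -- pointwise Taylor bound
  have hRbound : ∀ x ∈ B, |R x| ≤ (LH : ℝ) * ‖x‖ ^ 3 / 6 := by
    intro x hx
    have hx' : ‖x‖ ≤ r := by simpa [hB, mem_closedBall, dist_zero_right] using hx
    simpa [hR] using taylor_remainder_bound r x0 f U hU hsub hf LH hlip x hx'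
  -- continuity of R on B
  have hRcont : ContinuousOn R B := by
    have h1 : ContinuousOn (fun x : EuclideanSpace ℝ (Fin n) => f (x0 + x)) B := by
      apply hf.continuousOn.comp (continuous_const.add continuous_id).continuousOn
      intro x hx
      apply hsub
      simpa [hB, mem_closedBall, dist_eq_norm, add_sub_cancel_left] using hx
    have h2 : Continuous (fun x : EuclideanSpace ℝ (Fin n) => (inner ℝ (gradient f x0) x : ℝ)) :=
      continuous_const.inner continuous_id
    have h3 : Continuous (fun x : EuclideanSpace ℝ (Fin n) => (inner ℝ (fderiv ℝ (gradient f) x0 x) x : ℝ)) :=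
      ((fderiv ℝ (gradient f) x0).continuous).inner continuous_id
    exact ((h1.sub continuousOn_const).sub h2.continuousOn).sub (continuous_const.mul h3).continuousOn
  have hcompact : IsCompact B := isCompact_closedBall _ _
  have hRint : IntegrableOn R B := hRcont.integrableOn_compact hcompact
  have hcoord : ∀ i : Fin n, Continuous (fun x : EuclideanSpace ℝ (Fin n) => (x i : ℝ)) := fun i => PiLp.continuous_apply 2 (fun _ : Fin n => ℝ) i
  -- the function g
  set g : EuclideanSpace ℝ (Fin n) → ℝ := fun x => ∑ i, z i * x i with hg
  have hgcont : Continuous g := by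
    apply continuous_finset_sum
    intro i _
    exact continuous_const.mul (hcoord i)
  have hgRint : IntegrableOn (fun x => g x * R x) B :=
    (hgcont.continuousOn.mul hRcont).integrableOn_compact hcompact
  have hg2int : IntegrableOn (fun x => g x * g x) B :=
    (hgcont.continuousOn.mul hgcont.continuousOn).integrableOn_compact hcompact
  have hR2int : IntegrableOn (fun x => R x * R x) B :=
    (hRcont.mul hRcont).integrableOn_compact hcompact
  -- z as vector integral identity
  have hnormsq : ‖vecE z‖ ^ 2 = ∑ i, (z i) ^ 2 := by
    rw [EuclideanSpace.norm_eq, Real.sq_sqrt (by positivity)]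
    congr 1; ext i
    simp [vecE, Real.norm_eq_abs, sq_abs]
  have hsum_eq : ∑ i, (z i) ^ 2 = ∫ x in B, g x * R x := by
    have h1 : ∀ i : Fin n, (z i) ^ 2 = ∫ x in B, z i * (x i * R x) := by
      intro i
      rw [integral_const_mul, ← hz i]
      ring
    rw [Finset.sum_congr rfl (fun i _ => h1 i), ← integral_finset_sum]
    · congr 1; ext x
      rw [hg, Finset.sum_mul]
      congr 1; ext i
      ring
    · intro i _
      exact (((hcoord i).continuousOn.mul hRcont).integrableOn_compact hcompact).const_mul _
  -- Cauchy-Schwarz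
  set IA : ℝ := ∫ x in B, g x * g x with hIA
  set IB : ℝ := ∫ x in B, g x * R x with hIB
  set IC : ℝ := ∫ x in B, R x * R x with hIC
  have hCS : IB ^ 2 ≤ IA * IC := by
    have hquad : ∀ t : ℝ, 0 ≤ IA * (t * t) + (2 * IB) * t + IC := by
      intro t
      have hexp : ∫ x in B, (t * g x + R x) ^ 2
          = IA * (t * t) + (2 * IB) * t + IC := by
        have : ∀ x : EuclideanSpace ℝ (Fin n), (t * g x + R x) ^ 2
            = (t * t) * (g x * g x) + (2 * t) * (g x * R x) + R x * R x := by
          intro x; ring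
        rw [MeasureTheory.integral_congr_ae (Filter.Eventually.of_forall
          (fun x => this x))]
        have e1 : IntegrableOn (fun x => (t*t) * (g x * g x)) B := hg2int.const_mul (t*t)
        have e2 : IntegrableOn (fun x => (2*t) * (g x * R x)) B := hgRint.const_mul (2*t)
        have e12 : IntegrableOn (fun x => (t*t) * (g x * g x) + (2*t) * (g x * R x)) B :=
          e1.add e2
        rw [integral_add e12 hR2int, integral_add e1 e2,
          integral_const_mul, integral_const_mul]
        rw [hIA, hIB, hIC]; ring
      rw [← hexp]
      apply setIntegral_nonneg measurableSet_closedBall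
      intro x _
      positivity
    have hd := discrim_le_zero hquad
    rw [discrim] at hd
    nlinarith [hd]
  -- compute IA
  have hN2 : ∀ i : Fin n, (∫ x in B, (x i : ℝ) ^ 2)
      = (1 / (n:ℝ)) * ∫ x in B, ‖x‖ ^ 2 := fun i => coord_sq_integral hn r i
  set M2 : ℝ := ∫ x in B, ‖x‖ ^ 2 with hM2
  set M6 : ℝ := ∫ x in B, ‖x‖ ^ 6 with hM6
  set N2 : ℝ := (1 / (n:ℝ)) * M2 with hN2def
  have hIAval : IA = (∑ i, (z i) ^ 2) * N2 := by
    have hexp : ∀ x : EuclideanSpace ℝ (Fin n), g x * g x = ∑ i, ∑ j, (z i * z j) * (x i * x j) := by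
      intro x
      rw [hg, Finset.sum_mul_sum]
      apply Finset.sum_congr rfl; intro i _
      apply Finset.sum_congr rfl; intro j _
      ring
    rw [hIA, MeasureTheory.integral_congr_ae (Filter.Eventually.of_forall hexp)]
    rw [integral_finset_sum]
    · have hinner : ∀ i : Fin n, (∫ x in B, ∑ j, (z i * z j) * (x i * x j))
          = (z i) ^ 2 * N2 := by
        intro i
        rw [integral_finset_sum]
        · have hterm : ∀ j : Fin n,
              (∫ x in B, (z i * z j) * (x i * x j))
                = if j = i then (z i) ^ 2 * N2 else 0 := by
            intro j
            rw [integral_const_mul]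
            by_cases hji : j = i
            · subst hji
              rw [if_pos rfl]
              have : (∫ x in B, (x j : ℝ) * x j) = N2 := by
                rw [hN2def, ← hN2 j]
                congr 1; ext x; ring
              rw [this]; ring
            · rw [if_neg hji, coord_mul_integral r i j (fun h => hji h.symm), mul_zero]
          rw [Finset.sum_congr rfl (fun j _ => hterm j), Finset.sum_ite_eq']
          simp
        · intro j _
          exact ((((hcoord i).continuousOn.mul (hcoord j).continuousOn)).integrableOn_compact
            hcompact).const_mul _
      rw [Finset.sum_congr rfl (fun i _ => hinner i), ← Finset.sum_mul]
    · intro i _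
      apply integrable_finset_sum
      intro j _
      exact ((((hcoord i).continuousOn.mul (hcoord j).continuousOn)).integrableOn_compact
        hcompact).const_mul _
  -- bound IC
  have hICbound : IC ≤ ((LH : ℝ) ^ 2 / 36) * M6 := by
    rw [hIC, hM6, ← integral_const_mul]
    apply setIntegral_mono_on hR2int
      (((continuous_const.mul ((continuous_norm).pow 6)).continuousOn).integrableOn_compact
        hcompact)
      measurableSet_closedBall
    intro x hx
    have h1 := hRbound x hx
    have h2 : R x * R x = |R x| ^ 2 := by rw [sq_abs]; ring
    rw [h2]
    have h3 : |R x| ^ 2 ≤ ((LH : ℝ) * ‖x‖ ^ 3 / 6) ^ 2 :=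
      pow_le_pow_left₀ (abs_nonneg _) h1 2
    calc |R x| ^ 2 ≤ ((LH : ℝ) * ‖x‖ ^ 3 / 6) ^ 2 := h3
      _ = (LH : ℝ) ^ 2 / 36 * ‖x‖ ^ 6 := by ring
  have hICnonneg : 0 ≤ IC := by
    rw [hIC]
    apply setIntegral_nonneg measurableSet_closedBall
    intro x _
    exact mul_self_nonneg _
  -- key inequality : ‖vecE z‖^2 ≤ N2 * ((LH)^2/36) * M6
  have hM2nonneg : 0 ≤ M2 := by
    rw [hM2]; apply setIntegral_nonneg measurableSet_closedBall; intro x _; positivity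
  have hN2nonneg : 0 ≤ N2 := by
    rw [hN2def]
    exact mul_nonneg (by positivity) hM2nonneg
  have hM6nonneg : 0 ≤ M6 := by
    rw [hM6]; apply setIntegral_nonneg measurableSet_closedBall; intro x _; positivity
  have hkey : ‖vecE z‖ ^ 2 ≤ N2 * ((LH : ℝ) ^ 2 / 36) * M6 := by
    have h1 : ‖vecE z‖ ^ 2 = IB := by rw [hnormsq, hsum_eq]
    have h2 : IB ^ 2 ≤ (IB * N2) * IC := by
      calc IB ^ 2 ≤ IA * IC := hCS
        _ = (IB * N2) * IC := by rw [hIAval, hsum_eq]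
    by_cases hIB0 : IB ≤ 0
    · have h5 : (0:ℝ) ≤ N2 * ((LH : ℝ) ^ 2 / 36) * M6 :=
        mul_nonneg (mul_nonneg hN2nonneg (by positivity)) hM6nonneg
      rw [h1]
      linarith
    · push_neg at hIB0
      have h3 : IB ≤ N2 * IC := by
        have h4 : IB * IB ≤ (N2 * IC) * IB := by
          calc IB * IB = IB ^ 2 := by ring
            _ ≤ (IB * N2) * IC := h2
            _ = (N2 * IC) * IB := by ring
        exact le_of_mul_le_mul_right h4 hIB0
      calc ‖vecE z‖ ^ 2 = IB := h1
        _ ≤ N2 * IC := h3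
        _ ≤ N2 * (((LH : ℝ) ^ 2 / 36) * M6) :=
            mul_le_mul_of_nonneg_left hICbound hN2nonneg
        _ = N2 * ((LH : ℝ) ^ 2 / 36) * M6 := by ring
  -- volume constants
  haveI : Nonempty (Fin n) := ⟨⟨0, hn⟩⟩
  set ω : ℝ := (volume (Metric.ball (0 : EuclideanSpace ℝ (Fin n)) 1)).toReal with hωdef
  have hGhalf : (0:ℝ) < Real.Gamma ((n:ℝ)/2 + 1) := Real.Gamma_pos_of_pos (by positivity)
  have hωval : ω = Real.sqrt Real.pi ^ n / Real.Gamma ((n:ℝ)/2 + 1) := by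
    rw [hωdef, EuclideanSpace.volume_ball, Fintype.card_fin]
    rw [ENNReal.toReal_mul, ENNReal.toReal_pow, ENNReal.toReal_ofReal (by norm_num : (0:ℝ) ≤ 1),
      ENNReal.toReal_ofReal (by positivity)]
    simp
  have hωpos : 0 < ω := by
    rw [hωval]; positivity
  have hM2val : M2 = (n:ℝ) * ω * (r ^ (n + 2) / ((n:ℝ) + 2)) := by
    rw [hM2, hB]
    have := ball_moment n 2 hn r hr
    rw [this]
    push_cast
    ring
  have hM6val : M6 = (n:ℝ) * ω * (r ^ (n + 6) / ((n:ℝ) + 6)) := by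
    rw [hM6, hB]
    have := ball_moment n 6 hn r hr
    rw [this]
    push_cast
    ring
  have hnR : (1:ℝ) ≤ (n:ℝ) := by exact_mod_cast hn
  have hN2val : N2 = ω * r ^ (n + 2) / ((n:ℝ) + 2) := by
    rw [hN2def, hM2val]
    field_simp
  -- the volume Vnp2
  have hpow : Real.pi ^ ((n : ℝ)/2 + 1) = Real.sqrt Real.pi ^ n * Real.pi := by
    rw [Real.rpow_add Real.pi_pos, Real.rpow_one]
    congr 1
    rw [Real.sqrt_eq_rpow, ← Real.rpow_natCast (Real.pi ^ ((1:ℝ)/2)) n,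
      ← Real.rpow_mul Real.pi_pos.le]
    congr 1
    ring
  have hVval : Vnp2 n r = 2 * Real.pi * ω * r ^ (n + 2) / ((n:ℝ) + 2) := by
    rw [Vnp2, hpow, hωval]
    field_simp
  have hVpos : 0 < Vnp2 n r := by
    rw [hVval]; positivity
  have hfrac : 2 * Real.pi / Vnp2 n r = ((n:ℝ) + 2) / (ω * r ^ (n + 2)) := by
    rw [hVval]
    field_simp
  -- Gamma facts
  have hGppos : 0 < Real.Gamma (((n:ℝ) + 4)/2) := Real.Gamma_pos_of_pos (by positivity)
  have hGmpos : 0 < Real.Gamma (((n:ℝ) + 3)/2) := Real.Gamma_pos_of_pos (by positivity)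
  have hGamma : Real.Gamma (((n:ℝ) + 3)/2) ^ 2 * ((n:ℝ) + 2)
      ≤ 2 * Real.Gamma (((n:ℝ) + 4)/2) ^ 2 := by
    have h := gamma_half_sq (((n:ℝ) + 2)/2) (by positivity)
    have e1 : ((n:ℝ)+2)/2 + 1/2 = ((n:ℝ)+3)/2 := by ring
    have e2 : ((n:ℝ)+2)/2 + 1 = ((n:ℝ)+4)/2 := by ring
    rw [e1, e2] at h
    linarith [h]
  have hπ2 : Real.pi ^ 2 ≤ 2 * (n:ℝ) + 12 := by
    have h3 : Real.pi ^ 2 ≤ 3.15 ^ 2 :=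
      pow_le_pow_left₀ Real.pi_pos.le (le_of_lt Real.pi_lt_d2) 2
    have h4 : (3.15:ℝ) ^ 2 = 9.9225 := by norm_num
    linarith
  -- final assembly
  rw [hfrac]
  set sn := Real.sqrt (n:ℝ) with hsn
  set sπ := Real.sqrt Real.pi with hsπ
  have hsn2 : sn ^ 2 = (n:ℝ) := Real.sq_sqrt (Nat.cast_nonneg n)
  have hsπ2 : sπ ^ 2 = Real.pi := Real.sq_sqrt Real.pi_pos.le
  have hsπpos : 0 < sπ := Real.sqrt_pos.mpr Real.pi_pos
  have hKnonneg : 0 ≤ sn / (3 * sπ) * (LH:ℝ)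
      * (Real.Gamma (((n:ℝ) + 4)/2) / (sπ * Real.Gamma (((n:ℝ) + 3)/2))) * r ^ 2 := by
    have hsnn : 0 ≤ sn := Real.sqrt_nonneg _
    positivity
  apply le_of_pow_le_pow_left₀ two_ne_zero hKnonneg
  have hQnn : (0:ℝ) ≤ (((n:ℝ) + 2) / (ω * r ^ (n + 2))) ^ 2 := sq_nonneg _
  calc (((n:ℝ) + 2) / (ω * r ^ (n + 2)) * ‖vecE z‖) ^ 2
      = (((n:ℝ) + 2) / (ω * r ^ (n + 2))) ^ 2 * ‖vecE z‖ ^ 2 := by ring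
    _ ≤ (((n:ℝ) + 2) / (ω * r ^ (n + 2))) ^ 2 * (N2 * ((LH : ℝ) ^ 2 / 36) * M6) :=
        mul_le_mul_of_nonneg_left hkey hQnn
    _ = (n:ℝ) * ((n:ℝ) + 2) * (LH:ℝ) ^ 2 * r ^ 4 / (36 * ((n:ℝ) + 6)) := by
        rw [hN2val, hM6val]
        field_simp
        ring
    _ ≤ (sn / (3 * sπ) * (LH:ℝ)
          * (Real.Gamma (((n:ℝ) + 4)/2) / (sπ * Real.Gamma (((n:ℝ) + 3)/2))) * r ^ 2) ^ 2 := by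
        have e : (sn / (3 * sπ) * (LH:ℝ)
            * (Real.Gamma (((n:ℝ) + 4)/2) / (sπ * Real.Gamma (((n:ℝ) + 3)/2))) * r ^ 2) ^ 2
          = (sn ^ 2 / (9 * sπ ^ 2)) * (LH:ℝ) ^ 2
            * (Real.Gamma (((n:ℝ) + 4)/2) ^ 2 / (sπ ^ 2 * Real.Gamma (((n:ℝ) + 3)/2) ^ 2))
            * (r ^ 2) ^ 2 := by ring
        rw [e, hsn2, hsπ2]
        have e2 : ((n:ℝ) / (9 * Real.pi)) * (LH:ℝ) ^ 2
            * (Real.Gamma (((n:ℝ) + 4)/2) ^ 2 / (Real.pi * Real.Gamma (((n:ℝ) + 3)/2) ^ 2))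
            * (r ^ 2) ^ 2
          = (n:ℝ) * (LH:ℝ) ^ 2 * Real.Gamma (((n:ℝ) + 4)/2) ^ 2 * r ^ 4
              / (9 * Real.pi ^ 2 * Real.Gamma (((n:ℝ) + 3)/2) ^ 2) := by
          field_simp
        rw [e2]
        rw [div_le_div_iff₀ (by positivity) (by positivity)]
        have F3 : 9 * Real.pi ^ 2 * Real.Gamma (((n:ℝ) + 3)/2) ^ 2 * ((n:ℝ) + 2)
            ≤ 36 * Real.Gamma (((n:ℝ) + 4)/2) ^ 2 * ((n:ℝ) + 6) := by
          calc 9 * Real.pi ^ 2 * Real.Gamma (((n:ℝ) + 3)/2) ^ 2 * ((n:ℝ) + 2)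
              = (9 * Real.pi ^ 2) * (Real.Gamma (((n:ℝ) + 3)/2) ^ 2 * ((n:ℝ) + 2)) := by ring
            _ ≤ (9 * Real.pi ^ 2) * (2 * Real.Gamma (((n:ℝ) + 4)/2) ^ 2) :=
                mul_le_mul_of_nonneg_left hGamma (by positivity)
            _ = (18 * Real.Gamma (((n:ℝ) + 4)/2) ^ 2) * Real.pi ^ 2 := by ring
            _ ≤ (18 * Real.Gamma (((n:ℝ) + 4)/2) ^ 2) * (2 * (n:ℝ) + 12) :=
                mul_le_mul_of_nonneg_left hπ2 (by positivity)
            _ = 36 * Real.Gamma (((n:ℝ) + 4)/2) ^ 2 * ((n:ℝ) + 6) := by ring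
        calc (n:ℝ) * ((n:ℝ) + 2) * (LH:ℝ) ^ 2 * r ^ 4
              * (9 * Real.pi ^ 2 * Real.Gamma (((n:ℝ) + 3)/2) ^ 2)
            = ((n:ℝ) * (LH:ℝ) ^ 2 * r ^ 4)
              * (9 * Real.pi ^ 2 * Real.Gamma (((n:ℝ) + 3)/2) ^ 2 * ((n:ℝ) + 2)) := by ring
          _ ≤ ((n:ℝ) * (LH:ℝ) ^ 2 * r ^ 4)
              * (36 * Real.Gamma (((n:ℝ) + 4)/2) ^ 2 * ((n:ℝ) + 6)) := by
              apply mul_le_mul_of_nonneg_left F3 (by positivity)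
          _ = (n:ℝ) * (LH:ℝ) ^ 2 * Real.Gamma (((n:ℝ) + 4)/2) ^ 2 * r ^ 4
              * (36 * ((n:ℝ) + 6)) := by ring

end
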